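/- For every finitary consistent multiple-conclusion deductive system L = (F, ⊢) over a countable set of formulas F, there exists a conservative translation f : L →c CPC_m into the multiple-conclusion classical propositional consequence relation. -/

import Mathlib

/-- Formulas of classical propositional logic over countably many variables. -/
inductive PropForm : Type
  | var : ℕ → PropForm
  | bot : PropForm
  | top : PropForm
  | neg : PropForm → PropForm
  | and : PropForm → PropForm → PropForm
  | or : PropForm → PropForm → PropForm
  | imp : PropForm → PropForm → PropForm

/-- Boolean evaluation of a formula under a valuation. -/
def PropForm.eval (v : ℕ → Bool) : PropForm → Bool
  | .var n => v n
  | .bot => false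
  | .top => true
  | .neg φ => !(φ.eval v)
  | .and φ ψ => φ.eval v && ψ.eval v
  | .or φ ψ => φ.eval v || ψ.eval v
  | .imp φ ψ => !(φ.eval v) || ψ.eval v

/-- Multiple-conclusion classical consequence `CPC_m`. -/
def CpcM (Γ Δ : Set PropForm) : Prop :=
  ∀ v : ℕ → Bool, (∀ φ ∈ Γ, φ.eval v = true) → ∃ ψ ∈ Δ, ψ.eval v = true

/-- A multiple-conclusion deductive system, with the general cut rule. -/
structure MCSystem (F : Type*) where
  Thm : Set F → Set F → Prop
  refl : ∀ φ : F, Thm {φ} {φ}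
  mono : ∀ {Γ Γ' Δ Δ' : Set F}, Thm Γ Δ → Γ ⊆ Γ' → Δ ⊆ Δ' → Thm Γ' Δ'
  cut : ∀ (Γ Δ Ξ : Set F),
    (∀ P Q : Set F, P ∪ Q = Ξ → Thm (Γ ∪ P) (Q ∪ Δ)) → Thm Γ Δ

/-- Finitarity for multiple-conclusion systems. -/
def MCSystem.Finitary {F : Type*} (L : MCSystem F) : Prop :=
  ∀ (Γ Δ : Set F), L.Thm Γ Δ →
    ∃ Γ' ⊆ Γ, ∃ Δ' ⊆ Δ, Γ'.Finite ∧ Δ'.Finite ∧ L.Thm Γ' Δ'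

/-- Consistency: `∅ ⊬ ∅`. -/
def MCSystem.Consistent {F : Type*} (L : MCSystem F) : Prop :=
  ¬ L.Thm ∅ ∅

section AuxDev

/-- Any Boolean function depending only on variables below `k` is computed by a formula. -/
theorem formula_of_depends (k : ℕ) (h : (ℕ → Bool) → Bool)
    (hd : ∀ v w : ℕ → Bool, (∀ i < k, v i = w i) → h v = h w) :
    ∃ φ : PropForm, ∀ v, φ.eval v = h v := by
  induction k generalizing h with
  | zero =>
    cases hb : h (fun _ => false) with
    | false => exact ⟨.bot, fun v => by simp [PropForm.eval, hd v (fun _ => false) (by omega), hb]⟩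
    | true => exact ⟨.top, fun v => by simp [PropForm.eval, (hd v (fun _ => false) (by omega)).trans hb]⟩
  | succ k ih =>
    obtain ⟨φ0, hφ0⟩ := ih (fun v => h (Function.update v k false))
      (fun v w hvw => hd _ _ (fun i hi => by
        rcases eq_or_ne i k with rfl | hik
        · simp
        · simp only [Function.update_of_ne hik]; exact hvw i (by omega)))
    obtain ⟨φ1, hφ1⟩ := ih (fun v => h (Function.update v k true))
      (fun v w hvw => hd _ _ (fun i hi => by
        rcases eq_or_ne i k with rfl | hik
        · simp
        · simp only [Function.update_of_ne hik]; exact hvw i (by omega)))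
    refine ⟨.or (.and (.var k) φ1) (.and (.neg (.var k)) φ0), fun v => ?_⟩
    have key : ∀ b, v k = b → h (Function.update v k b) = h v := by
      rintro b rfl; rw [Function.update_eq_self]
    cases hv : v k with
    | false => simp [PropForm.eval, hv, hφ0, key false hv]
    | true => simp [PropForm.eval, hv, hφ1, key true hv]

variable {F : Type} (X : Set (Set F)) (dec : ℕ → Option F)

/-- A pair of finite "decided true / decided false" sets is good if it extends to a member of X. -/
def GoodP (A B : Set F) : Prop := ∃ T ∈ X, A ⊆ T ∧ B ⊆ Tᶜ

open Classical in
/-- Greedy prefix construction: decide formulas one at a time, following `v` when possible. -/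
noncomputable def pref (v : ℕ → Bool) : ℕ → Set F × Set F
  | 0 => (∅, ∅)
  | n+1 =>
    let p := pref v n
    match dec n with
    | none => p
    | some φ =>
      if v n then
        if GoodP X (insert φ p.1) p.2 then (insert φ p.1, p.2) else (p.1, insert φ p.2)
      else
        if GoodP X p.1 (insert φ p.2) then (p.1, insert φ p.2) else (insert φ p.1, p.2)

theorem pref_mono (v : ℕ → Bool) {n m : ℕ} (hnm : n ≤ m) :
    (pref X dec v n).1 ⊆ (pref X dec v m).1 ∧ (pref X dec v n).2 ⊆ (pref X dec v m).2 := by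
  induction m with
  | zero =>
    have : n = 0 := by omega
    subst this; exact ⟨subset_rfl, subset_rfl⟩
  | succ m ih =>
    rcases Nat.lt_or_ge n (m+1) with hlt | hge
    · have ih' := ih (by omega)
      have : (pref X dec v m).1 ⊆ (pref X dec v (m+1)).1 ∧
          (pref X dec v m).2 ⊆ (pref X dec v (m+1)).2 := by
        rw [pref]
        cases dec m with
        | none => exact ⟨subset_rfl, subset_rfl⟩
        | some φ =>
          by_cases hv : v m
          · by_cases hG : GoodP X (insert φ (pref X dec v m).1) (pref X dec v m).2 <;>
              simp [hv, hG, Set.subset_insert, subset_rfl]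
          · by_cases hG : GoodP X (pref X dec v m).1 (insert φ (pref X dec v m).2) <;>
              simp [hv, hG, Set.subset_insert, subset_rfl]
      exact ⟨ih'.1.trans this.1, ih'.2.trans this.2⟩
    · have : n = m + 1 := by omega
      subst this; exact ⟨subset_rfl, subset_rfl⟩

theorem pref_mem_union (v : ℕ → Bool) {n : ℕ} {φ : F} (hφ : dec n = some φ) :
    φ ∈ (pref X dec v (n+1)).1 ∪ (pref X dec v (n+1)).2 := by
  rw [pref, hφ]
  by_cases hv : v n
  · by_cases hG : GoodP X (insert φ (pref X dec v n).1) (pref X dec v n).2 <;> simp [hv, hG]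
  · by_cases hG : GoodP X (pref X dec v n).1 (insert φ (pref X dec v n).2) <;> simp [hv, hG]

theorem pref_good (v : ℕ → Bool) (hX : X.Nonempty) (n : ℕ) :
    GoodP X (pref X dec v n).1 (pref X dec v n).2 := by
  induction n with
  | zero => obtain ⟨T, hT⟩ := hX; exact ⟨T, hT, by simp [pref], by simp [pref]⟩
  | succ n ih =>
    rw [pref]
    cases dec n with
    | none => exact ih
    | some φ =>
      obtain ⟨T, hT, hA, hB⟩ := ih
      have halt : GoodP X (insert φ (pref X dec v n).1) (pref X dec v n).2 ∨
          GoodP X (pref X dec v n).1 (insert φ (pref X dec v n).2) := by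
        by_cases hφT : φ ∈ T
        · exact Or.inl ⟨T, hT, Set.insert_subset hφT hA, hB⟩
        · exact Or.inr ⟨T, hT, hA, Set.insert_subset hφT hB⟩
      by_cases hv : v n
      · by_cases hG : GoodP X (insert φ (pref X dec v n).1) (pref X dec v n).2
        · simpa [hv, hG] using hG
        · simp only [hv, if_true, hG, if_false]
          exact halt.resolve_left hG
      · by_cases hG : GoodP X (pref X dec v n).1 (insert φ (pref X dec v n).2)
        · simpa [hv, hG] using hG
        · simp only [hv, if_false, hG]
          exact halt.resolve_right hG

theorem pref_depends {v w : ℕ → Bool} {n : ℕ} (hvw : ∀ i < n, v i = w i) :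
    pref X dec v n = pref X dec w n := by
  induction n with
  | zero => rfl
  | succ n ih =>
    have ih' := ih (fun i hi => hvw i (by omega))
    rw [pref, pref, ih', hvw n (by omega)]

open Classical in
theorem pref_of_mem {g : F → ℕ} (hg : Function.Injective g)
    (hdec : ∀ (φ : F) (n : ℕ), dec n = some φ ↔ g φ = n)
    {T : Set F} (hT : T ∈ X) (n : ℕ) :
    pref X dec (fun m => decide (∃ φ, dec m = some φ ∧ φ ∈ T)) n
      = ({φ | φ ∈ T ∧ g φ < n}, {φ | φ ∉ T ∧ g φ < n}) := by
  set v : ℕ → Bool := fun m => decide (∃ φ, dec m = some φ ∧ φ ∈ T) with hv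
  induction n with
  | zero =>
    rw [pref]
    refine Prod.ext ?_ ?_ <;> (ext ψ; simp)
  | succ n ih =>
    rw [pref, ih]
    cases hdn : dec n with
    | none =>
      have hnone : ∀ ψ : F, g ψ ≠ n := by
        intro ψ hψ
        have := (hdec ψ n).mpr hψ
        rw [hdn] at this; exact nomatch this
      have e1 : {ψ : F | ψ ∈ T ∧ g ψ < n} = {ψ | ψ ∈ T ∧ g ψ < n+1} := by
        ext ψ
        simp only [Set.mem_setOf_eq, and_congr_right_iff]
        intro _
        have := hnone ψ; omega
      have e2 : {ψ : F | ψ ∉ T ∧ g ψ < n} = {ψ | ψ ∉ T ∧ g ψ < n+1} := by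
        ext ψ
        simp only [Set.mem_setOf_eq, and_congr_right_iff]
        intro _
        have := hnone ψ; omega
      simp [e1, e2]
    | some φ =>
      have hgφ : g φ = n := (hdec φ n).mp hdn
      have hvn : v n = decide (φ ∈ T) := by
        rw [hv]
        refine decide_eq_decide.mpr ⟨?_, fun h => ⟨φ, hdn, h⟩⟩
        rintro ⟨ψ, hψ1, hψ2⟩
        rw [hdn, Option.some_inj] at hψ1
        exact hψ1 ▸ hψ2
      by_cases hφT : φ ∈ T
      · have hs1' : insert φ {ψ : F | ψ ∈ T ∧ g ψ < n} = {ψ | ψ ∈ T ∧ g ψ < n+1} := by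
          ext ψ
          simp only [Set.mem_insert_iff, Set.mem_setOf_eq]
          constructor
          · rintro (rfl | ⟨h1, h2⟩)
            · exact ⟨hφT, by omega⟩
            · exact ⟨h1, by omega⟩
          · rintro ⟨h1, h2⟩
            rcases Nat.lt_or_ge (g ψ) n with h | h
            · exact Or.inr ⟨h1, h⟩
            · exact Or.inl (hg (by omega))
        have e2 : {ψ : F | ψ ∉ T ∧ g ψ < n} = {ψ | ψ ∉ T ∧ g ψ < n+1} := by
          ext ψ
          simp only [Set.mem_setOf_eq]
          constructor
          · rintro ⟨h1, h2⟩; exact ⟨h1, by omega⟩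
          · rintro ⟨h1, h2⟩
            refine ⟨h1, ?_⟩
            rcases Nat.lt_or_ge (g ψ) n with h | h
            · exact h
            · exfalso
              have hψφ : ψ = φ := hg (by omega)
              subst hψφ
              exact h1 hφT
        have hG : GoodP X (insert φ {ψ : F | ψ ∈ T ∧ g ψ < n}) {ψ | ψ ∉ T ∧ g ψ < n} :=
          ⟨T, hT, by rw [hs1']; intro ψ h; exact h.1, fun ψ h => h.1⟩
        simp [hvn, hφT, hG, hs1', e2]
        exact ⟨T, hT, fun ψ h => h.1, fun ψ h => h.1⟩
      · have hs2' : insert φ {ψ : F | ψ ∉ T ∧ g ψ < n} = {ψ | ψ ∉ T ∧ g ψ < n+1} := by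
          ext ψ
          simp only [Set.mem_insert_iff, Set.mem_setOf_eq]
          constructor
          · rintro (rfl | ⟨h1, h2⟩)
            · exact ⟨hφT, by omega⟩
            · exact ⟨h1, by omega⟩
          · rintro ⟨h1, h2⟩
            rcases Nat.lt_or_ge (g ψ) n with h | h
            · exact Or.inr ⟨h1, h⟩
            · exact Or.inl (hg (by omega))
        have e1 : {ψ : F | ψ ∈ T ∧ g ψ < n} = {ψ | ψ ∈ T ∧ g ψ < n+1} := by
          ext ψ
          simp only [Set.mem_setOf_eq]
          constructor
          · rintro ⟨h1, h2⟩; exact ⟨h1, by omega⟩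
          · rintro ⟨h1, h2⟩
            refine ⟨h1, ?_⟩
            rcases Nat.lt_or_ge (g ψ) n with h | h
            · exact h
            · exfalso
              have hψφ : ψ = φ := hg (by omega)
              subst hψφ
              exact hφT h1
        have hG : GoodP X {ψ : F | ψ ∈ T ∧ g ψ < n} (insert φ {ψ : F | ψ ∉ T ∧ g ψ < n}) :=
          ⟨T, hT, fun ψ h => h.1, by rw [hs2']; intro ψ h; exact h.1⟩
        simp [hvn, hφT, hG, hs2', e1]
        exact ⟨T, hT, fun ψ h => h.1, fun ψ h => h.1⟩

end AuxDev

/-- Every finitary consistent multiple-conclusion deductive system over a countable set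
of formulas has a conservative translation into multiple-conclusion classical logic. -/
theorem conservative_translation_to_CpcM {F : Type} [Countable F]
    (L : MCSystem F) (hfin : L.Finitary) (hcons : L.Consistent) :
    ∃ f : F → PropForm, ∀ Γ Δ : Set F, L.Thm Γ Δ ↔ CpcM (f '' Γ) (f '' Δ) := by
  classical
  obtain ⟨g, hg⟩ := exists_injective_nat F
  set X : Set (Set F) := {T | ¬ L.Thm T Tᶜ} with hX
  set dec : ℕ → Option F := Function.partialInv g with hdecdef
  have hdec : ∀ (φ : F) (n : ℕ), dec n = some φ ↔ g φ = n := fun φ n =>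
    Function.partialInv_of_injective hg φ n
  -- X is nonempty, by consistency and the cut rule with Ξ = univ.
  have hXne : X.Nonempty := by
    by_contra h
    rw [Set.not_nonempty_iff_eq_empty] at h
    apply hcons
    apply L.cut ∅ ∅ Set.univ
    intro P Q hPQ
    have hPX : L.Thm P Pᶜ := by
      by_contra hP
      have : P ∈ X := hP
      rw [h] at this
      exact this
    refine L.mono hPX (by simp) ?_
    intro ψ hψ
    refine Set.mem_union_left _ ?_
    have hmem : ψ ∈ P ∪ Q := hPQ ▸ Set.mem_univ ψ
    rcases hmem with h' | h'
    · exact absurd h' hψ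
    · exact h'
  -- Key lemma: Thm Γ Δ iff every consistent partition containing Γ meets Δ.
  have key : ∀ Γ Δ : Set F, L.Thm Γ Δ ↔ ∀ T ∈ X, Γ ⊆ T → ∃ δ ∈ Δ, δ ∈ T := by
    intro Γ Δ
    constructor
    · intro h T hTX hΓT
      by_contra hc
      push_neg at hc
      exact hTX (L.mono h hΓT (fun δ hδ => hc δ hδ))
    · intro h
      by_contra hΓΔ
      have hnot : ¬ ∀ P Q : Set F, P ∪ Q = Set.univ → L.Thm (Γ ∪ P) (Q ∪ Δ) :=
        fun hall => hΓΔ (L.cut Γ Δ Set.univ hall)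
      push_neg at hnot
      obtain ⟨P, Q, hPQ, hnthm⟩ := hnot
      have hTX : (Γ ∪ P) ∈ X := by
        intro hthm
        apply hnthm
        refine L.mono hthm subset_rfl ?_
        intro ψ hψ
        refine Set.mem_union_left _ ?_
        have hmem : ψ ∈ P ∪ Q := hPQ ▸ Set.mem_univ ψ
        rcases hmem with h' | h'
        · exact absurd (Set.mem_union_right _ h') hψ
        · exact h'
      obtain ⟨δ, hδΔ, hδT⟩ := h (Γ ∪ P) hTX Set.subset_union_left
      apply hnthm
      exact L.mono (L.refl δ) (Set.singleton_subset_iff.mpr hδT)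
        (Set.singleton_subset_iff.mpr (Set.mem_union_right _ hδΔ))
  -- The retraction onto X.
  set Tv : (ℕ → Bool) → Set F := fun v => {φ | φ ∈ (pref X dec v (g φ + 1)).1} with hTv
  have mem_Tv : ∀ (v : ℕ → Bool) (φ : F), φ ∈ Tv v ↔ φ ∈ (pref X dec v (g φ + 1)).1 :=
    fun v φ => Iff.rfl
  -- Every Tv v lies in X (finitarity).
  have TvX : ∀ v : ℕ → Bool, Tv v ∈ X := by
    intro v hthm
    obtain ⟨Γ', hΓ', Δ', hΔ', hΓf, hΔf, hthm'⟩ := hfin _ _ hthm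
    have hbdd : ∃ n : ℕ, ∀ φ ∈ Γ' ∪ Δ', g φ + 1 ≤ n := by
      obtain ⟨n, hn⟩ := ((hΓf.union hΔf).image g).bddAbove
      exact ⟨n + 1, fun φ hφ => by
        have := hn (Set.mem_image_of_mem g hφ); omega⟩
    obtain ⟨n, hn⟩ := hbdd
    obtain ⟨T, hT, hA, hB⟩ := pref_good X dec v hXne n
    apply hT
    refine L.mono hthm' ?_ ?_
    · intro γ hγ
      exact hA ((pref_mono X dec v (hn γ (Set.mem_union_left _ hγ))).1
        ((mem_Tv v γ).mp (hΓ' hγ)))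
    · intro δ hδ
      have hdd : dec (g δ) = some δ := (hdec δ (g δ)).mpr rfl
      have hmu := pref_mem_union X dec v hdd
      have hδ2 : δ ∈ (pref X dec v (g δ + 1)).2 :=
        hmu.resolve_left (fun hc => (hΔ' hδ) ((mem_Tv v δ).mpr hc))
      exact hB ((pref_mono X dec v (hn δ (Set.mem_union_right _ hδ))).2 hδ2)
  -- Every member of X is of the form Tv v (retraction property).
  have Tv_surj : ∀ T ∈ X, ∃ v : ℕ → Bool, Tv v = T := by
    intro T hT
    refine ⟨fun m => decide (∃ φ, dec m = some φ ∧ φ ∈ T), ?_⟩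
    ext φ
    rw [mem_Tv, pref_of_mem X dec hg hdec hT (g φ + 1)]
    simp only [Set.mem_setOf_eq]
    constructor
    · exact fun h => h.1
    · exact fun h => ⟨h, by omega⟩
  -- Each coordinate of the retraction depends on finitely many variables.
  have dep : ∀ φ : F, ∀ v w : ℕ → Bool, (∀ i < g φ + 1, v i = w i) →
      decide (φ ∈ (pref X dec v (g φ + 1)).1) = decide (φ ∈ (pref X dec w (g φ + 1)).1) := by
    intro φ v w hvw
    rw [pref_depends X dec hvw]
  choose f hf using fun φ : F =>
    formula_of_depends (g φ + 1) (fun v => decide (φ ∈ (pref X dec v (g φ + 1)).1)) (dep φ)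
  refine ⟨f, fun Γ Δ => ?_⟩
  rw [key]
  constructor
  · intro h v hvΓ
    have hΓT : Γ ⊆ Tv v := by
      intro γ hγ
      have := hvΓ (f γ) ⟨γ, hγ, rfl⟩
      rw [hf γ v] at this
      exact (mem_Tv v γ).mpr (of_decide_eq_true this)
    obtain ⟨δ, hδΔ, hδT⟩ := h (Tv v) (TvX v) hΓT
    exact ⟨f δ, ⟨δ, hδΔ, rfl⟩, by rw [hf δ v]; exact decide_eq_true ((mem_Tv v δ).mp hδT)⟩
  · intro h T hTX hΓT
    obtain ⟨v, hv⟩ := Tv_surj T hTX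
    have hprem : ∀ x ∈ f '' Γ, x.eval v = true := by
      rintro _ ⟨γ, hγ, rfl⟩
      rw [hf γ v]
      exact decide_eq_true ((mem_Tv v γ).mp (hv ▸ hΓT hγ))
    obtain ⟨_, ⟨δ, hδΔ, rfl⟩, hev⟩ := h v hprem
    refine ⟨δ, hδΔ, ?_⟩
    rw [hf δ v] at hev
    exact hv ▸ ((mem_Tv v δ).mpr (of_decide_eq_true hev))
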